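/- Every regular (a,b)-module of rank 1 is isomorphic to E_λ for some λ ∈ ℂ. -/

import Mathlib

set_option synthInstance.maxHeartbeats 1000000
set_option maxHeartbeats 1000000

open PowerSeries

noncomputable section

/-- `ℂ[[b]]`. -/
abbrev Rb := PowerSeries ℂ

variable {E : Type} [AddCommGroup E] [Module Rb E]
  [Module ℂ E] [IsScalarTower ℂ Rb E]

/-- Multiplication by `bⁿ`, i.e. the submodule `bⁿ·G` of a `ℂ[[b]]`-module. -/
def bpow (n : ℕ) (G : Submodule Rb E) : Submodule Rb E :=
  (Ideal.span {(X : Rb) ^ n}) • G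

/-- The operator `b` (multiplication by `X`) as a `ℂ`-linear endomorphism. -/
def bop : E →ₗ[ℂ] E := (LinearMap.lsmul Rb E (X : Rb)).restrictScalars ℂ

/-- An (a,b)-module structure: `E` is a free finite-rank `ℂ[[b]]`-module
and `a` is a `ℂ`-linear, `b`-adically continuous endomorphism with
`a·b − b·a = b²`; equivalently, `a(S·x) = S·a(x) + b²·S'(b)·x` for all
`S ∈ ℂ[[b]]`. -/
def IsABMod (a : E →ₗ[ℂ] E) : Prop :=
  ∀ (S : Rb) (x : E), a (S • x) = S • a x + ((X : Rb) ^ 2 * derivative ℂ S) • x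

/-- The operators `Tⱼ = bʲ·(b⁻¹a)ʲ`, defined recursively by `T₀ = id`,
`T_{j+1} = (a − j·b)∘Tⱼ`. -/
def Tj (a : E →ₗ[ℂ] E) : ℕ → (E →ₗ[ℂ] E)
  | 0 => LinearMap.id
  | (j + 1) => (a - (j : ℂ) • bop) ∘ₗ Tj a j

/-- The `ℂ`-subspace `Σ_{j=0}^{k} aʲ·b^{k−j+1}·E`. -/
def Psi (a : E →ₗ[ℂ] E) (k : ℕ) : Submodule ℂ E :=
  ⨆ j ∈ Finset.range (k + 1),
    Submodule.map (a ^ j) ((bpow (k - j + 1) ⊤).restrictScalars ℂ)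

/-- The regularity condition `a^{k+1}·E ⊆ Σ_{j=0}^{k} aʲ·b^{k−j+1}·E`. -/
def RegCond (a : E →ₗ[ℂ] E) (k : ℕ) : Prop :=
  ∀ x : E, (a ^ (k + 1)) x ∈ Psi a k

/-- `E` is regular (equivalently: some regularity condition holds). -/
def IsRegularAB (a : E →ₗ[ℂ] E) : Prop := ∃ k, RegCond a k

/-- The regularity order `or(E)`. -/
def regOrder (a : E →ₗ[ℂ] E) : ℕ := sInf {k | RegCond a k}

/-- `b^k·E^♯ = b^k·Φ_k(E) = Σ_{j=0}^{k} b^{k−j}·Tⱼ(E)`: the saturation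
`E^♯ = Σ_j (b⁻¹a)ʲ·E` of `E`, renormalized by `b^k` so as to live inside `E`. -/
def Wsat (a : E →ₗ[ℂ] E) (k : ℕ) : Submodule Rb E :=
  Submodule.span Rb
    (⋃ j ∈ Finset.range (k + 1), Set.range fun x : E => ((X : Rb) ^ (k - j)) • (Tj a j x))

/-- A submodule `G ⊆ E` is a simple-pole submodule when `a·G ⊆ b·G`. -/
def SimplePoleSub (a : E →ₗ[ℂ] E) (G : Submodule Rb E) : Prop :=
  ∀ x ∈ G, a x ∈ bpow 1 G

/-- The index `δ(E)`: the smallest `m` with `E^♯ ⊆ b^{−m}·E`,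
i.e. `bᵐ·E^♯ ⊆ E`, i.e. `bᵐ·(b^k·E^♯) ⊆ b^k·E` for `k = or(E)`. -/
def deltaIdx (a : E →ₗ[ℂ] E) : ℕ :=
  sInf {m | bpow m (Wsat a (regOrder a)) ≤ bpow (regOrder a) ⊤}

/-- The biggest simple-pole submodule `E^b` of `E`. -/
def Eb (a : E →ₗ[ℂ] E) : Submodule Rb E := sSup {G | SimplePoleSub a G}

/-! ### Auxiliary lemmas -/

lemma bpow_one_top_eq :
    bpow 1 (⊤ : Submodule Rb E) = Ideal.span {(X : Rb)} • ⊤ := by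
  unfold bpow; rw [pow_one]

lemma mem_bpow_one_top {x : E} :
    x ∈ bpow 1 (⊤ : Submodule Rb E) ↔ ∃ y : E, (X : Rb) • y = x := by
  rw [bpow_one_top_eq]
  constructor
  · intro hx
    refine Submodule.smul_induction_on hx ?_ ?_
    · rintro r hr n -
      rcases Ideal.mem_span_singleton.mp hr with ⟨c, rfl⟩
      exact ⟨c • n, by rw [mul_smul]⟩
    · rintro x y ⟨u, rfl⟩ ⟨v, rfl⟩
      exact ⟨u + v, by rw [smul_add]⟩
  · rintro ⟨y, rfl⟩
    exact Submodule.smul_mem_smul (Ideal.subset_span rfl) (Submodule.mem_top (x := y))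

lemma astab {a : E →ₗ[ℂ] E} (ha : IsABMod a) {x : E}
    (hx : x ∈ bpow 1 (⊤ : Submodule Rb E)) : a x ∈ bpow 1 (⊤ : Submodule Rb E) := by
  rcases mem_bpow_one_top.mp hx with ⟨y, rfl⟩
  refine mem_bpow_one_top.mpr ⟨a y + (X : Rb) • y, ?_⟩
  rw [ha (X : Rb) y, derivative_X, mul_one, smul_add, pow_two, mul_smul]

lemma apow_stab {a : E →ₗ[ℂ] E} (ha : IsABMod a) (j : ℕ) {x : E}
    (hx : x ∈ bpow 1 (⊤ : Submodule Rb E)) : (a ^ j) x ∈ bpow 1 (⊤ : Submodule Rb E) := by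
  induction j generalizing x with
  | zero => simpa using hx
  | succ j ih =>
    rw [pow_succ, Module.End.mul_apply]
    exact ih (astab ha hx)

lemma Psi_le {a : E →ₗ[ℂ] E} (ha : IsABMod a) (k : ℕ) :
    Psi a k ≤ (bpow 1 (⊤ : Submodule Rb E)).restrictScalars ℂ := by
  refine iSup₂_le fun j hj => ?_
  intro y hy
  rcases Submodule.mem_map.mp hy with ⟨x, hx, rfl⟩
  have hx1 : x ∈ bpow 1 (⊤ : Submodule Rb E) := by
    have hle : bpow (k - j + 1) (⊤ : Submodule Rb E) ≤ bpow 1 ⊤ := by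
      rw [bpow_one_top_eq]
      exact Submodule.smul_mono_left (Ideal.span_singleton_le_span_singleton.mpr
        (dvd_pow_self _ (Nat.succ_ne_zero _)))
    exact hle hx
  exact apow_stab ha j hx1

/-- The coefficient sequence of the power-series solution of `X·U' = -(T-T(0))·U`. -/
def useq (t : ℕ → ℂ) : ℕ → ℂ
  | 0 => 1
  | (n+1) => (-((n : ℂ)+1))⁻¹ * ∑ i ∈ Finset.range (n+1), t (i+1) * useq t (n - i)
decreasing_by omega

lemma useq_zero (t : ℕ → ℂ) : useq t 0 = 1 := by simp [useq]

lemma useq_succ (t : ℕ → ℂ) (n : ℕ) :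
    useq t (n+1) = (-((n : ℂ)+1))⁻¹ * ∑ i ∈ Finset.range (n+1), t (i+1) * useq t (n - i) := by
  rw [useq]

lemma useq_rec (t : ℕ → ℂ) (n : ℕ) :
    ∑ i ∈ Finset.range (n+1), useq t i * t (n + 1 - i) = -((n : ℂ)+1) * useq t (n+1) := by
  rw [useq_succ, ← mul_assoc, mul_inv_cancel₀ (by
    intro h
    have : ((n : ℂ) + 1) = 0 := by linear_combination -h
    exact_mod_cast (Nat.cast_add_one_ne_zero (R := ℂ) n) this), one_mul]
  rw [← Finset.sum_range_reflect]
  apply Finset.sum_congr rfl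
  intro i hi
  rw [Finset.mem_range] at hi
  have h1 : n + 1 - 1 - i = n - i := by omega
  have h2 : n + 1 - (n + 1 - 1 - i) = i + 1 := by omega
  rw [h1] at h2 ⊢
  rw [h2, mul_comm]

lemma ode_key (T : Rb) :
    (mk (useq fun m => coeff m T)) * T + X * derivative ℂ (mk (useq fun m => coeff m T)) =
      C (constantCoeff T) * (mk (useq fun m => coeff m T)) := by
  set t : ℕ → ℂ := fun m => coeff m T with ht
  ext n
  rw [map_add, coeff_C_mul]
  cases n with
  | zero =>
    rw [coeff_zero_X_mul]
    simp only [coeff_zero_eq_constantCoeff, map_mul, constantCoeff_mk, useq_zero, one_mul,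
      add_zero]
    ring
  | succ n =>
    rw [coeff_succ_X_mul, coeff_derivative, coeff_mk, coeff_mul]
    have hconv : ∑ p ∈ Finset.HasAntidiagonal.antidiagonal (n+1), coeff p.1 (mk (useq t)) * coeff p.2 T
        = ∑ i ∈ Finset.range (n+2), useq t i * t (n + 1 - i) := by
      rw [Finset.Nat.sum_antidiagonal_eq_sum_range_succ
        (fun i j => coeff i (mk (useq t)) * coeff j T)]
      apply Finset.sum_congr rfl
      intro i _
      rw [coeff_mk]
    rw [hconv, Finset.sum_range_succ]
    have hrec := useq_rec t n
    have h0 : t (n + 1 - (n + 1)) = t 0 := by norm_num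
    rw [h0]
    have h1 : t 0 = constantCoeff T := by
      rw [ht, ← coeff_zero_eq_constantCoeff_apply]
    rw [h1]
    linear_combination hrec

/-- Every regular (a,b)-module of rank 1 is isomorphic to `E_λ` for some
`λ ∈ ℂ`: it admits a `ℂ[[b]]`-generator `e` with `a·e = λ·b·e`. -/
theorem stmt_6 [Module.Free Rb E] [Module.Finite Rb E]
    (a : E →ₗ[ℂ] E) (ha : IsABMod a) (hreg : IsRegularAB a)
    (hrank : Module.finrank Rb E = 1) :
    ∃ (lam : ℂ) (e : E), Submodule.span Rb {e} = ⊤ ∧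
      a e = ((PowerSeries.C lam) * X) • e := by
  obtain ⟨k, hk⟩ := hreg
  let b : Module.Basis (Fin 1) Rb E := (Module.finBasis Rb E).reindex (finCongr hrank)
  set e₀ := b 0 with he₀
  have hrepr : ∀ x : E, x = (b.repr x 0) • e₀ := by
    intro x
    have h := b.sum_repr x
    rw [Fin.sum_univ_one] at h
    exact h.symm
  have hcancel : ∀ Q : Rb, Q • e₀ = 0 → Q = 0 := by
    intro Q hQ
    have h := congrArg (fun z => b.repr z 0) hQ
    simpa [he₀, Module.Basis.repr_self, Finsupp.smul_apply, smul_eq_mul] using h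
  obtain ⟨S, hS⟩ : ∃ S : Rb, a e₀ = S • e₀ := ⟨b.repr (a e₀) 0, hrepr _⟩
  set c := constantCoeff S with hc
  have hdecomp : ∀ j : ℕ, ∃ z ∈ bpow 1 (⊤ : Submodule Rb E),
      (a ^ j) e₀ = (C (c ^ j)) • e₀ + z := by
    intro j
    induction j with
    | zero =>
      refine ⟨0, Submodule.zero_mem _, ?_⟩
      simp
    | succ j ih =>
      obtain ⟨z, hz, hzeq⟩ := ih
      obtain ⟨W, hW⟩ : (X : Rb) ∣ (S - C c) :=
        X_dvd_iff.mpr (by rw [map_sub, constantCoeff_C, ← hc, sub_self])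
      refine ⟨(C (c ^ j)) • ((X * W) • e₀) + a z, ?_, ?_⟩
      · exact Submodule.add_mem _
          (Submodule.smul_mem _ _ (mem_bpow_one_top.mpr ⟨W • e₀, (mul_smul _ _ _).symm⟩))
          (astab ha hz)
      · rw [pow_succ', Module.End.mul_apply, hzeq, map_add, ha (C (c ^ j)) e₀]
        rw [derivative_C, mul_zero, zero_smul, add_zero, hS]
        have hsplit : S • e₀ = (C c) • e₀ + (X * W) • e₀ := by
          rw [← hW, ← add_smul, add_sub_cancel]
        rw [hsplit, smul_add, smul_smul, ← map_mul, ← pow_succ]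
        abel
  have hc0 : c = 0 := by
    have h1 : (a ^ (k + 1)) e₀ ∈ bpow 1 (⊤ : Submodule Rb E) := Psi_le ha k (hk e₀)
    obtain ⟨z, hz, hzeq⟩ := hdecomp (k + 1)
    have h2 : (C (c ^ (k + 1))) • e₀ ∈ bpow 1 (⊤ : Submodule Rb E) := by
      have h : (C (c ^ (k + 1))) • e₀ = (a ^ (k + 1)) e₀ - z := by rw [hzeq]; abel
      rw [h]
      exact Submodule.sub_mem _ h1 hz
    obtain ⟨y, hy⟩ := mem_bpow_one_top.mp h2
    rw [hrepr y, ← mul_smul] at hy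
    have h4 : ((X : Rb) * b.repr y 0 - C (c ^ (k + 1))) • e₀ = 0 := by
      rw [sub_smul, hy, sub_self]
    have h5 := hcancel _ h4
    have h6 : c ^ (k + 1) = 0 := by
      have h := congrArg (constantCoeff (R := ℂ)) h5
      simpa [map_sub, map_mul, constantCoeff_X, constantCoeff_C] using h
    exact pow_eq_zero_iff (Nat.succ_ne_zero k) |>.mp h6
  obtain ⟨T, hT⟩ : (X : Rb) ∣ S := X_dvd_iff.mpr (by rw [← hc, hc0])
  set U : Rb := mk (useq fun m => coeff m T) with hU
  set lam := constantCoeff T with hlam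
  have hkey := ode_key T
  have hU0 : constantCoeff U = 1 := by
    rw [hU, ← coeff_zero_eq_constantCoeff_apply, coeff_mk, useq_zero]
  have hUnit : IsUnit U := isUnit_iff_constantCoeff.mpr (by rw [hU0]; exact isUnit_one)
  obtain ⟨V, hV⟩ := hUnit.exists_right_inv
  refine ⟨lam, U • e₀, ?_, ?_⟩
  · rw [eq_top_iff]
    intro x _
    rw [Submodule.mem_span_singleton]
    refine ⟨b.repr x 0 * V, ?_⟩
    rw [smul_smul, mul_assoc, mul_comm V U, hV, mul_one]
    exact (hrepr x).symm
  · rw [ha U e₀, hS, smul_smul, ← add_smul]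
    have hsc : U * S + (X : Rb) ^ 2 * derivative ℂ U = (C lam * X) * U := by
      rw [hT]
      linear_combination (X : Rb) * hkey
    rw [hsc, mul_smul]

end
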